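/- Let M be a commutative binoid and a ∈ M. The unique homomorphism M^sl → (M/(a))^sl induced by the Rees quotient map q₁ : M → M/(a) (the unique map making the square with the two booleanization maps commute) is an isomorphism if and only if a is nilpotent. -/

import Mathlib

/-- The Rees congruence on a binoid by an ideal `I`:
`a ~ b` iff `a = b` or both `a, b ∈ I`. -/
def reesCon {M : Type*} [CommMonoidWithZero M] (I : Set M)
    (hI : ∀ a ∈ I, ∀ m : M, a * m ∈ I) : Con M where
  r a b := a = b ∨ (a ∈ I ∧ b ∈ I)
  iseqv := by
    refine ⟨fun _ => Or.inl rfl, ?_, ?_⟩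
    · rintro a b (rfl | h)
      · exact Or.inl rfl
      · exact Or.inr ⟨h.2, h.1⟩
    · rintro a b c (rfl | h1) (rfl | h2)
      · exact Or.inl rfl
      · exact Or.inr h2
      · exact Or.inr h1
      · exact Or.inr ⟨h1.1, h2.2⟩
  mul' := by
    rintro a b c d (rfl | h1) (rfl | h2)
    · exact Or.inl rfl
    · exact Or.inr ⟨by rw [mul_comm]; exact hI _ h2.1 a, by rw [mul_comm]; exact hI _ h2.2 a⟩
    · exact Or.inr ⟨hI _ h1.1 _, hI _ h1.2 _⟩
    · exact Or.inr ⟨hI _ h1.1 _, hI _ h1.2 _⟩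
/-- The principal ideal `xM = {x*m | m ∈ M}`. -/
def principalIdeal {M : Type*} [CommMonoidWithZero M] (x : M) : Set M := {a | ∃ m, a = x * m}

/-- The Rees congruence by the principal ideal `xM`; its quotient is `M/(x)`. -/
def reesConP {M : Type*} [CommMonoidWithZero M] (x : M) : Con M :=
  reesCon (principalIdeal x) (by rintro a ⟨m, rfl⟩ c; exact ⟨m * c, mul_assoc x m c⟩)
/-- The booleanization congruence: the smallest monoid congruence identifying every `m`
with `m * m`; its quotient is `M^sl`. -/
def slCon (M : Type*) [Mul M] : Con M := conGen fun x y => y = x * x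

section Aux
variable {M : Type*} [CommMonoid M]

lemma pow_helper {x y u v c e : M} {m p : ℕ} (h1 : x^(m+1) = y*c) (h3 : u^(p+1) = v*e) :
    (x*u)^((m+1)*(p+1)) = (y*v) * (y^p * v^m * (c^(p+1) * e^(m+1))) := by
  calc (x*u)^((m+1)*(p+1)) = (x^(m+1))^(p+1) * (u^(p+1))^(m+1) := by
        rw [mul_pow, pow_mul, pow_mul']
    _ = (y*c)^(p+1) * (v*e)^(m+1) := by rw [h1, h3]
    _ = (y*v) * (y^p * v^m * (c^(p+1) * e^(m+1))) := by
        rw [mul_pow, mul_pow]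
        simp [pow_succ, mul_comm, mul_assoc, mul_left_comm]

/-- Explicit description congruence. -/
def divCon (M : Type*) [CommMonoid M] : Con M where
  r x y := ∃ m n : ℕ, ∃ c d : M, 1 ≤ m ∧ 1 ≤ n ∧ x ^ m = y * c ∧ y ^ n = x * d
  iseqv := by
    refine ⟨fun x => ⟨1, 1, 1, 1, le_refl 1, le_refl 1, by simp, by simp⟩, ?_, ?_⟩
    · rintro x y ⟨m, n, c, d, hm, hn, h1, h2⟩
      exact ⟨n, m, d, c, hn, hm, h2, h1⟩
    · rintro x y z ⟨m, n, c, d, hm, hn, h1, h2⟩ ⟨p, q, e, g, hp, hq, h3, h4⟩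
      refine ⟨m * p, q * n, e * c ^ p, d * g ^ n, Nat.one_le_iff_ne_zero.2 (by positivity),
        Nat.one_le_iff_ne_zero.2 (by positivity), ?_, ?_⟩
      · rw [pow_mul, h1, mul_pow, h3]; simp [mul_comm, mul_assoc, mul_left_comm]
      · rw [pow_mul, h4, mul_pow, h2]; simp [mul_comm, mul_assoc, mul_left_comm]
  mul' := by
    rintro x y u v ⟨m, n, c, d, hm, hn, h1, h2⟩ ⟨p, q, e, g, hp, hq, h3, h4⟩
    obtain ⟨m, rfl⟩ : ∃ m', m = m' + 1 := ⟨m - 1, by omega⟩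
    obtain ⟨n, rfl⟩ : ∃ n', n = n' + 1 := ⟨n - 1, by omega⟩
    obtain ⟨p, rfl⟩ : ∃ p', p = p' + 1 := ⟨p - 1, by omega⟩
    obtain ⟨q, rfl⟩ : ∃ q', q = q' + 1 := ⟨q - 1, by omega⟩
    exact ⟨(m+1)*(p+1), (n+1)*(q+1), y^p * v^m * (c^(p+1) * e^(m+1)),
      x^q * u^n * (d^(q+1) * g^(n+1)), Nat.one_le_iff_ne_zero.2 (by positivity),
      Nat.one_le_iff_ne_zero.2 (by positivity), pow_helper h1 h3, pow_helper h2 h4⟩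

lemma slCon_mk_sq (x : M) : ((x * x : M) : (slCon M).Quotient) = (x : (slCon M).Quotient) := by
  have h : (slCon M) x (x * x) := ConGen.Rel.of _ _ rfl
  exact ((Con.eq _).2 ((slCon M).symm h))

lemma slCon_mk_pow (x : M) : ∀ m : ℕ, 1 ≤ m →
    ((x : (slCon M).Quotient)) ^ m = (x : (slCon M).Quotient) := by
  intro m hm
  induction m with
  | zero => omega
  | succ k ih =>
    rcases Nat.eq_or_lt_of_le hm with h | h
    · simp [← h]
    · rw [pow_succ, ih (by omega), ← Con.coe_mul, slCon_mk_sq]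

lemma slCon_rel_iff {x y : M} :
    (slCon M) x y ↔ ∃ m n : ℕ, ∃ c d : M, 1 ≤ m ∧ 1 ≤ n ∧ x ^ m = y * c ∧ y ^ n = x * d := by
  constructor
  · intro h
    have hle : slCon M ≤ divCon M := by
      apply Con.conGen_le.2
      rintro u v rfl
      exact ⟨2, 1, 1, u, one_le_two, le_refl 1, by rw [pow_two, mul_one], by rw [pow_one]⟩
    exact hle h
  · rintro ⟨m, n, c, d, hm, hn, h1, h2⟩
    rw [← Con.eq]
    have hc : ((x ^ m : M) : (slCon M).Quotient) = (x : (slCon M).Quotient) ^ m :=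
      map_pow (slCon M).mk' x m
    have hd : ((y ^ n : M) : (slCon M).Quotient) = (y : (slCon M).Quotient) ^ n :=
      map_pow (slCon M).mk' y n
    have sq : ∀ z : M, (z : (slCon M).Quotient) * z = z := fun z => by
      rw [← Con.coe_mul, slCon_mk_sq]
    have H1 : (x : (slCon M).Quotient) = (y : (slCon M).Quotient) * c := by
      rw [← slCon_mk_pow x m hm, ← hc, h1, Con.coe_mul]
    have H2 : (y : (slCon M).Quotient) = (x : (slCon M).Quotient) * d := by
      rw [← slCon_mk_pow y n hn, ← hd, h2, Con.coe_mul]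
    have key : (x : (slCon M).Quotient) * y = x := by
      calc (x : (slCon M).Quotient) * y = ((y : (slCon M).Quotient) * c) * y := by rw [← H1]
        _ = ((y : (slCon M).Quotient) * y) * c := by
            rw [mul_assoc, mul_comm (c : (slCon M).Quotient), ← mul_assoc]
        _ = (y : (slCon M).Quotient) * c := by rw [sq y]
        _ = x := H1.symm
    have key2 : (y : (slCon M).Quotient) * x = y := by
      calc (y : (slCon M).Quotient) * x = ((x : (slCon M).Quotient) * d) * x := by rw [← H2]
        _ = ((x : (slCon M).Quotient) * x) * d := by
            rw [mul_assoc, mul_comm (d : (slCon M).Quotient), ← mul_assoc]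
        _ = (x : (slCon M).Quotient) * d := by rw [sq x]
        _ = y := H2.symm
    rw [← key, mul_comm, key2]
end Aux

section Main
variable {M : Type*} [CommMonoidWithZero M]

lemma rees_rel_iff {a u v : M} :
    (reesConP a) u v ↔ u = v ∨ ((∃ s, u = a * s) ∧ (∃ t, v = a * t)) := Iff.rfl

lemma rees_key {a x y c : M} {k m : ℕ} (hk1 : 1 ≤ k) (hk : a ^ k = 0) (hm : 1 ≤ m)
    (h : (reesConP a) (x ^ m) (y * c)) : ∃ p e, 1 ≤ p ∧ x ^ p = y * e := by
  rcases rees_rel_iff.1 h with h | ⟨⟨u, hu⟩, -⟩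
  · exact ⟨m, c, hm, h⟩
  · refine ⟨m * k, 0, Nat.one_le_iff_ne_zero.2 (by positivity), ?_⟩
    rw [pow_mul, hu, mul_pow, hk, zero_mul, mul_zero]

end Main

/-- The unique homomorphism `M^sl → (M/(a))^sl` induced by the Rees quotient
map `q₁ : M → M/(a)` (the unique map making the square with the two booleanization maps
commute) is an isomorphism if and only if `a` is nilpotent. -/
theorem sl_rees_iso_iff_nilpotent {M : Type*} [CommMonoidWithZero M] (a : M)
    (f : (slCon M).Quotient →* (slCon (reesConP a).Quotient).Quotient)
    (hf : ∀ m : M,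
      f ((slCon M).mk' m) = (slCon (reesConP a).Quotient).mk' ((reesConP a).mk' m)) :
    Function.Bijective f ↔ ∃ n : ℕ, 1 ≤ n ∧ a ^ n = 0 := by
  classical
  constructor
  · intro hbij
    have h0 : (reesConP a).mk' a = (reesConP a).mk' 0 := by
      apply (Con.eq _).2
      exact rees_rel_iff.2 (Or.inr ⟨⟨1, (mul_one a).symm⟩, ⟨0, (mul_zero a).symm⟩⟩)
    have h1 : f ((slCon M).mk' a) = f ((slCon M).mk' 0) := by
      rw [hf a, hf 0, h0]
    have h2 : (slCon M) a 0 := (Con.eq _).1 (hbij.1 h1)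
    obtain ⟨m, n, c, d, hm, hn, hmc, -⟩ := slCon_rel_iff.1 h2
    exact ⟨m, hm, by rw [hmc, zero_mul]⟩
  · rintro ⟨k, hk1, hk⟩
    constructor
    · intro z1 z2 h
      obtain ⟨x, rfl⟩ := Con.mk'_surjective z1
      obtain ⟨y, rfl⟩ := Con.mk'_surjective z2
      rw [hf x, hf y] at h
      have hrel : (slCon (reesConP a).Quotient) ((reesConP a).mk' x) ((reesConP a).mk' y) :=
        (Con.eq _).1 h
      obtain ⟨m, n, c, d, hm, hn, h1, h2⟩ := slCon_rel_iff.1 hrel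
      obtain ⟨c', rfl⟩ := Con.mk'_surjective c
      obtain ⟨d', rfl⟩ := Con.mk'_surjective d
      have h1' : (reesConP a) (x ^ m) (y * c') := by
        apply (Con.eq _).1
        rw [Con.coe_mul]
        rw [← map_pow (reesConP a).mk' x m] at h1
        exact h1
      have h2' : (reesConP a) (y ^ n) (x * d') := by
        apply (Con.eq _).1
        rw [Con.coe_mul]
        rw [← map_pow (reesConP a).mk' y n] at h2
        exact h2
      obtain ⟨p, e, hp, hpe⟩ := rees_key hk1 hk hm h1'
      obtain ⟨q, g, hq, hqg⟩ := rees_key hk1 hk hn h2'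
      exact (Con.eq _).2 (slCon_rel_iff.2 ⟨p, q, e, g, hp, hq, hpe, hqg⟩)
    · intro z
      obtain ⟨w, rfl⟩ := Con.mk'_surjective z
      obtain ⟨m, rfl⟩ := Con.mk'_surjective w
      exact ⟨(slCon M).mk' m, hf m⟩
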